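/- The function G(y) = h(√y + 1/2) + y is concave and monotone decreasing on the interval [0, 1/4], where h is the binary entropy function with logarithm base 2. -/

import Mathlib

open Real

lemma log_le_half_sub_inv {x : ℝ} (hx : 1 ≤ x) : Real.log x ≤ (x - x⁻¹) / 2 := by
  have hmono : MonotoneOn (fun x : ℝ => (x - x⁻¹) / 2 - Real.log x) (Set.Ici 1) := by
    have hder : ∀ z ∈ Set.Ioi (0:ℝ),
        HasDerivAt (fun x : ℝ => (x - x⁻¹) / 2 - Real.log x)
          ((1 - -(z^2)⁻¹) / 2 - z⁻¹) z := fun z hz =>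
      (((hasDerivAt_id z).sub (hasDerivAt_inv (ne_of_gt hz))).div_const 2).sub
        (Real.hasDerivAt_log (ne_of_gt hz))
    apply monotoneOn_of_deriv_nonneg (convex_Ici 1)
    · exact fun z hz => ((hder z (Set.mem_Ioi.mpr (lt_of_lt_of_le one_pos hz))).differentiableAt).continuousAt.continuousWithinAt
    · intro z hz
      rw [interior_Ici] at hz
      exact ((hder z (Set.mem_Ioi.mpr (lt_trans one_pos hz))).differentiableAt).differentiableWithinAt
    · intro z hz
      rw [interior_Ici] at hz
      have hz0 : (0:ℝ) < z := lt_trans one_pos hz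
      rw [(hder z hz0).deriv]
      have : (1 - -(z^2)⁻¹) / 2 - z⁻¹ = (z-1)^2 / (2*z^2) := by
        field_simp
        ring
      rw [this]
      positivity
  have h1 : (fun x : ℝ => (x - x⁻¹) / 2 - Real.log x) 1 ≤ (fun x : ℝ => (x - x⁻¹) / 2 - Real.log x) x :=
    hmono (Set.mem_Ici.mpr le_rfl) (Set.mem_Ici.mpr hx) hx
  simp only [Real.log_one, inv_one] at h1
  linarith [h1]

lemma key_lower {t : ℝ} (h0 : 0 < t) (h1 : t < 1/2) :
    2*t*Real.log 2 ≤ Real.log (t + 1/2) - Real.log (1 - (t + 1/2)) := by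
  have e1 : Real.log (1 - (t+1/2)) ≤ -(2*t) - Real.log 2 := by
    have heq : 1 - (t+1/2) = (1-2*t)/2 := by ring
    rw [heq, Real.log_div (by linarith) two_ne_zero]
    have := Real.log_le_sub_one_of_pos (show (0:ℝ) < 1-2*t by linarith)
    linarith
  have e2 : -Real.log 2 ≤ Real.log (t+1/2) := by
    have : Real.log (2⁻¹ : ℝ) ≤ Real.log (t+1/2) := Real.log_le_log (by norm_num) (by norm_num; linarith)
    rwa [Real.log_inv] at this
  have e3 : Real.log 2 ≤ 1 := by
    have := Real.log_le_sub_one_of_pos (show (0:ℝ) < 2 by norm_num)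
    linarith
  nlinarith [h0.le]

lemma key_upper {t : ℝ} (h0 : 0 < t) (h1 : t < 1/2) :
    Real.log (t + 1/2) - Real.log (1 - (t + 1/2)) ≤ t / (1/4 - t^2) := by
  have hb : (0:ℝ) < 1 - (t+1/2) := by linarith
  have ha : (0:ℝ) < t + 1/2 := by linarith
  have hx1 : 1 ≤ (t+1/2)/(1-(t+1/2)) := by rw [le_div_iff₀ hb]; linarith
  have h := log_le_half_sub_inv hx1
  rw [Real.log_div (ne_of_gt ha) (ne_of_gt hb)] at h
  refine h.trans (le_of_eq ?_)
  have h3 : (0:ℝ) < 1 - t^2*4 := by nlinarith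
  rw [inv_div, div_sub_div _ _ (ne_of_gt hb) (ne_of_gt ha), div_div, div_eq_div_iff
    (by positivity) (by nlinarith)]
  ring


noncomputable def binEnt (p : ℝ) : ℝ := -(p * Real.logb 2 p) - (1 - p) * Real.logb 2 (1 - p)

noncomputable def gAux (y : ℝ) : ℝ :=
  1 - (Real.log (Real.sqrt y + 1/2) - Real.log (1 - (Real.sqrt y + 1/2))) /
    (2 * Real.sqrt y * Real.log 2)

lemma sqrt_facts {y : ℝ} (hy : y ∈ Set.Ioo (0:ℝ) (1/4)) :
    0 < Real.sqrt y ∧ Real.sqrt y < 1/2 := by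
  refine ⟨Real.sqrt_pos.mpr hy.1, ?_⟩
  rw [show (1:ℝ)/2 = Real.sqrt (1/4) by
    rw [show (1:ℝ)/4 = (1/2)^2 by norm_num, Real.sqrt_sq (by norm_num)]]
  exact Real.sqrt_lt_sqrt hy.1.le hy.2

lemma hfeq : (fun y => binEnt (Real.sqrt y + 1/2) + y) =
    fun y => (-((Real.sqrt y + 1/2) * Real.log (Real.sqrt y + 1/2)) -
      (1 - (Real.sqrt y + 1/2)) * Real.log (1 - (Real.sqrt y + 1/2))) / Real.log 2 + y := by
  funext y
  simp only [binEnt, Real.logb]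
  ring

lemma f_hasDeriv {y : ℝ} (hy : y ∈ Set.Ioo (0:ℝ) (1/4)) :
    HasDerivAt (fun y => binEnt (Real.sqrt y + 1/2) + y) (gAux y) y := by
  obtain ⟨ht0, ht⟩ := sqrt_facts hy
  have hL : (0:ℝ) < Real.log 2 := Real.log_pos one_lt_two
  have hs : HasDerivAt Real.sqrt (1/(2*Real.sqrt y)) y := Real.hasDerivAt_sqrt (ne_of_gt hy.1)
  have hp : HasDerivAt (fun y => Real.sqrt y + 1/2) (1/(2*Real.sqrt y)) y := hs.add_const _
  have hp0 : Real.sqrt y + 1/2 ≠ 0 := by positivity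
  have hq : HasDerivAt (fun y => 1 - (Real.sqrt y + 1/2)) (-(1/(2*Real.sqrt y))) y :=
    hp.const_sub 1
  have hq0 : 1 - (Real.sqrt y + 1/2) ≠ 0 := by
    have : (0:ℝ) < 1 - (Real.sqrt y + 1/2) := by linarith
    exact ne_of_gt this
  have h1 : HasDerivAt (fun y => (Real.sqrt y + 1/2) * Real.log (Real.sqrt y + 1/2))
      ((Real.log (Real.sqrt y + 1/2) + 1) * (1/(2*Real.sqrt y))) y :=
    by have := (Real.hasDerivAt_mul_log hp0).comp y hp; exact this
  have h2 : HasDerivAt (fun y => (1 - (Real.sqrt y + 1/2)) * Real.log (1 - (Real.sqrt y + 1/2)))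
      ((Real.log (1 - (Real.sqrt y + 1/2)) + 1) * (-(1/(2*Real.sqrt y)))) y :=
    by have := (Real.hasDerivAt_mul_log hq0).comp y hq; exact this
  rw [hfeq]
  have h3 := ((h1.neg.sub h2).div_const (Real.log 2)).add (hasDerivAt_id y)
  refine h3.congr_deriv (Eq.symm ?_)
  unfold gAux
  field_simp
  ring

lemma g_deriv_le {y : ℝ} (hy : y ∈ Set.Ioo (0:ℝ) (1/4)) :
    ∃ d, d ≤ 0 ∧ HasDerivAt gAux d y := by
  obtain ⟨ht0, ht⟩ := sqrt_facts hy
  have hL : (0:ℝ) < Real.log 2 := Real.log_pos one_lt_two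
  have hs : HasDerivAt Real.sqrt (1/(2*Real.sqrt y)) y := Real.hasDerivAt_sqrt (ne_of_gt hy.1)
  have hp : HasDerivAt (fun y => Real.sqrt y + 1/2) (1/(2*Real.sqrt y)) y := hs.add_const _
  have hp0 : (0:ℝ) < Real.sqrt y + 1/2 := by positivity
  have hq : HasDerivAt (fun y => 1 - (Real.sqrt y + 1/2)) (-(1/(2*Real.sqrt y))) y :=
    hp.const_sub 1
  have hq0 : (0:ℝ) < 1 - (Real.sqrt y + 1/2) := by linarith
  have hN : HasDerivAt (fun y => Real.log (Real.sqrt y + 1/2) -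
      Real.log (1 - (Real.sqrt y + 1/2)))
      ((Real.sqrt y + 1/2)⁻¹ * (1/(2*Real.sqrt y)) -
       (1 - (Real.sqrt y + 1/2))⁻¹ * (-(1/(2*Real.sqrt y)))) y :=
    by have := ((Real.hasDerivAt_log (ne_of_gt hp0)).comp y hp).sub
              ((Real.hasDerivAt_log (ne_of_gt hq0)).comp y hq); exact this
  have hD : HasDerivAt (fun y => 2 * Real.sqrt y * Real.log 2)
      ((2 * (1/(2*Real.sqrt y))) * Real.log 2) y := (hs.const_mul 2).mul_const _
  have hD0 : 2 * Real.sqrt y * Real.log 2 ≠ 0 := by positivity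
  have h3 := (hN.div hD hD0).const_sub 1
  refine ⟨_, ?_, h3⟩
  set t := Real.sqrt y with htdef
  set N := Real.log (t + 1/2) - Real.log (1 - (t + 1/2)) with hNdef
  apply neg_nonpos_of_nonneg
  apply div_nonneg _ (by positivity)
  have habs : ∀ a b n u L : ℝ, a ≠ 0 → b ≠ 0 → u ≠ 0 →
      (a⁻¹ * (1/(2*u)) - b⁻¹ * (-(1/(2*u)))) * (2*u*L) - n * ((2 * (1/(2*u))) * L) =
      L * ((a⁻¹ + b⁻¹) - n/u) := by
    intro a b n u L ha hb hu
    field_simp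
    ring
  have hnum := habs (t + 1/2) (1 - (t + 1/2)) N t (Real.log 2)
    (ne_of_gt hp0) (ne_of_gt hq0) (ne_of_gt ht0)
  rw [hnum]
  apply mul_nonneg hL.le
  rw [sub_nonneg]
  have hinv : (t + 1/2)⁻¹ + (1 - (t + 1/2))⁻¹ = 1/((t + 1/2) * (1 - (t + 1/2))) := by
    rw [inv_add_inv (ne_of_gt hp0) (ne_of_gt hq0)]
    norm_num
  have hub := key_upper ht0 ht
  have hab : (t + 1/2) * (1 - (t + 1/2)) = 1/4 - t^2 := by ring
  rw [hinv, hab, div_le_div_iff₀ ht0 (by nlinarith)]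
  rw [← hNdef] at hub
  have h4 : (0:ℝ) < 1/4 - t^2 := by nlinarith
  rw [le_div_iff₀ h4] at hub
  linarith

lemma g_nonpos {y : ℝ} (hy : y ∈ Set.Ioo (0:ℝ) (1/4)) : gAux y ≤ 0 := by
  obtain ⟨ht0, ht⟩ := sqrt_facts hy
  have hL : (0:ℝ) < Real.log 2 := Real.log_pos one_lt_two
  unfold gAux
  rw [sub_nonpos]
  rw [le_div_iff₀ (by positivity)]
  have := key_lower ht0 ht
  linarith

lemma f_cont : ContinuousOn (fun y => binEnt (Real.sqrt y + 1/2) + y) (Set.Icc (0:ℝ) (1/4)) := by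
  rw [hfeq]
  apply Continuous.continuousOn
  have c1 : Continuous fun y : ℝ => Real.sqrt y + 1/2 := Real.continuous_sqrt.add continuous_const
  have c2 : Continuous fun y : ℝ => 1 - (Real.sqrt y + 1/2) := continuous_const.sub c1
  exact (((Real.continuous_mul_log.comp c1).neg.sub
    (Real.continuous_mul_log.comp c2)).div_const _).add continuous_id

theorem stmt_2 :
    ConcaveOn ℝ (Set.Icc (0:ℝ) (1/4)) (fun y => binEnt (Real.sqrt y + 1/2) + y) ∧
    AntitoneOn (fun y => binEnt (Real.sqrt y + 1/2) + y) (Set.Icc (0:ℝ) (1/4)) := by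
  have hdiff : DifferentiableOn ℝ (fun y => binEnt (Real.sqrt y + 1/2) + y)
      (interior (Set.Icc (0:ℝ) (1/4))) := by
    rw [interior_Icc]
    exact fun y hy => (f_hasDeriv hy).differentiableAt.differentiableWithinAt
  have hderiv_eq : ∀ y ∈ Set.Ioo (0:ℝ) (1/4),
      deriv (fun y => binEnt (Real.sqrt y + 1/2) + y) y = gAux y :=
    fun y hy => (f_hasDeriv hy).deriv
  have hganti : AntitoneOn gAux (Set.Ioo (0:ℝ) (1/4)) := by
    apply antitoneOn_of_deriv_nonpos (convex_Ioo _ _)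
    · exact fun y hy => (g_deriv_le hy).choose_spec.2.differentiableAt.continuousAt.continuousWithinAt
    · rw [interior_Ioo]
      exact fun y hy => (g_deriv_le hy).choose_spec.2.differentiableAt.differentiableWithinAt
    · intro y hy
      rw [interior_Ioo] at hy
      obtain ⟨d, hd0, hd⟩ := g_deriv_le hy
      rw [hd.deriv]
      exact hd0
  constructor
  · apply AntitoneOn.concaveOn_of_deriv (convex_Icc 0 (1/4)) f_cont hdiff
    rw [interior_Icc]
    intro a ha b hb hab
    rw [hderiv_eq a ha, hderiv_eq b hb]
    exact hganti ha hb hab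
  · apply antitoneOn_of_deriv_nonpos (convex_Icc 0 (1/4)) f_cont hdiff
    intro y hy
    rw [interior_Icc] at hy
    rw [hderiv_eq y hy]
    exact g_nonpos hy
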